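/- Let g:[0,1]→[0,1] be piecewise C² with respect to a mesh 0=z₀<z₁<⋯<z_{n+1}=1 (the restriction of g to each (z_i,z_{i+1}) extends to a C² function on [z_i,z_{i+1}]) and uniformly expanding: |g'|≥η>1 on each piece. For a refinement {w_{j,i}} of this mesh with maximal step θ, let 𝔏_θ:[0,1]→[0,1] be the piecewise linear interpolant of g. Then there exists a constant c>0, depending only on g, such that for all sufficiently small θ there exist a Borel set B_θ⊆[0,1] with Lebesgue measure m(B_θ)>1−c·√θ and a C¹ diffeomorphism d_θ:[0,1]→[0,1] such that g(x)=𝔏_θ(d_θ(x)) for all x∈B_θ, |d_θ(x)−x|<c·√θ for all x∈[0,1], and |1/d_θ'(x)−1|<c·√θ for all x∈[0,1]. In particular 𝔡(g,𝔏_θ)≤c·√θ, where 𝔡 is Keller's distance on piecewise expanding maps. -/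

import Mathlib

open MeasureTheory Filter Topology Set Function

noncomputable section

namespace Stmt14

/-- Keller's distance between two (piecewise expanding) maps of `[0,1]`. -/
def kellerDist (g g' : ℝ → ℝ) : ℝ :=
  sInf {ε : ℝ | 0 < ε ∧
    ∃ B : Set ℝ, MeasurableSet B ∧ B ⊆ Set.Icc 0 1 ∧
      (volume B).toReal > 1 - ε ∧
      ∃ d : ℝ → ℝ, ContDiffOn ℝ 1 d (Set.Icc 0 1) ∧ StrictMonoOn d (Set.Icc 0 1) ∧
        d '' Set.Icc 0 1 = Set.Icc 0 1 ∧
        (∀ x ∈ B, g x = g' (d x)) ∧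
        (∀ x ∈ Set.Icc (0:ℝ) 1, |d x - x| < ε) ∧
        (∀ x ∈ Set.Icc (0:ℝ) 1, |1 / derivWithin d (Set.Icc 0 1) x - 1| < ε)}

/-! ### Auxiliary material: cubic Hermite interpolation -/

/-- Cubic Hermite interpolant on `[a, a+ℓ]` with values `A, B` and derivatives `p, q`. -/
def herm (a ℓ A B p q x : ℝ) : ℝ :=
  A + p*(x-a) + ((x-a)^2/ℓ^2) * (3*(B-A) - (2*p+q)*ℓ) + ((x-a)^3/ℓ^3) * ((p+q)*ℓ - 2*(B-A))

def hermD (a ℓ A B p q x : ℝ) : ℝ :=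
  p + (2*(x-a)/ℓ^2) * (3*(B-A) - (2*p+q)*ℓ) + (3*(x-a)^2/ℓ^3) * ((p+q)*ℓ - 2*(B-A))

lemma hasDerivAt_herm (a ℓ A B p q x : ℝ) :
    HasDerivAt (herm a ℓ A B p q) (hermD a ℓ A B p q x) x := by
  unfold herm hermD
  have hx : HasDerivAt (fun x : ℝ => x - a) 1 x := (hasDerivAt_id x).sub_const a
  have h2 : HasDerivAt (fun x : ℝ => (x-a)^2) (2*(x-a)) x := by simpa using (hx.fun_pow 2)
  have h3 : HasDerivAt (fun x : ℝ => (x-a)^3) (3*(x-a)^2) x := by simpa using (hx.fun_pow 3)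
  have := ((((hasDerivAt_const x A).fun_add (hx.const_mul p)).fun_add
    ((h2.div_const (ℓ^2)).mul_const (3*(B-A) - (2*p+q)*ℓ))).fun_add
    ((h3.div_const (ℓ^3)).mul_const ((p+q)*ℓ - 2*(B-A))))
  refine this.congr_deriv ?_
  ring

lemma continuous_hermD (a ℓ A B p q : ℝ) : Continuous (hermD a ℓ A B p q) := by
  unfold hermD; fun_prop

lemma herm_left (a ℓ A B p q : ℝ) : herm a ℓ A B p q a = A := by simp [herm]
lemma hermD_left (a ℓ A B p q : ℝ) : hermD a ℓ A B p q a = p := by simp [hermD]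
lemma herm_right (a ℓ A B p q : ℝ) (hℓ : ℓ ≠ 0) : herm a ℓ A B p q (a + ℓ) = B := by
  unfold herm; field_simp; ring
lemma hermD_right (a ℓ A B p q : ℝ) (hℓ : ℓ ≠ 0) : hermD a ℓ A B p q (a + ℓ) = q := by
  unfold hermD; field_simp; ring

lemma hermD_bound (a ℓ A B p q : ℝ) (hℓ : 0 < ℓ) {x : ℝ} (hx : x ∈ Icc a (a + ℓ)) :
    |hermD a ℓ A B p q x - 1| ≤ 8*|p-1| + 5*|q-1| + 12*|(B-A)/ℓ - 1| := by
  set τ : ℝ := (x - a)/ℓ with hτ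
  have hτ0 : 0 ≤ τ := div_nonneg (by linarith [hx.1]) hℓ.le
  have hτ1 : τ ≤ 1 := by
    rw [hτ, div_le_one hℓ]; linarith [hx.2]
  set m : ℝ := (B - A)/ℓ with hm
  have key : hermD a ℓ A B p q x - 1
      = (p-1) + (2*τ) * (3*(m-1) - 2*(p-1) - (q-1)) + (3*τ^2) * ((p-1) + (q-1) - 2*(m-1)) := by
    unfold hermD
    rw [hτ, hm]
    field_simp
    ring
  rw [key]
  have h1 : |(p-1) + (2*τ) * (3*(m-1) - 2*(p-1) - (q-1)) + (3*τ^2) * ((p-1) + (q-1) - 2*(m-1))|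
      ≤ |p-1| + (2*τ) * |3*(m-1) - 2*(p-1) - (q-1)| + (3*τ^2) * |(p-1) + (q-1) - 2*(m-1)| := by
    calc _ ≤ |(p-1) + (2*τ) * (3*(m-1) - 2*(p-1) - (q-1))|
        + |(3*τ^2) * ((p-1) + (q-1) - 2*(m-1))| := abs_add_le _ _
      _ ≤ _ := by
          gcongr
          · calc _ ≤ |p-1| + |(2*τ) * (3*(m-1) - 2*(p-1) - (q-1))| := abs_add_le _ _
              _ = _ := by rw [abs_mul, abs_of_nonneg (by linarith : (0:ℝ) ≤ 2*τ)]
          · rw [abs_mul, abs_of_nonneg (by positivity : (0:ℝ) ≤ 3*τ^2)]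
  refine h1.trans ?_
  have e1 : |3*(m-1) - 2*(p-1) - (q-1)| ≤ 3*|m-1| + 2*|p-1| + |q-1| := by
    have a1 := neg_abs_le (m-1); have a2 := le_abs_self (m-1)
    have b1 := neg_abs_le (p-1); have b2 := le_abs_self (p-1)
    have c1 := neg_abs_le (q-1); have c2 := le_abs_self (q-1)
    rw [abs_le]; constructor <;> linarith
  have e2 : |(p-1) + (q-1) - 2*(m-1)| ≤ |p-1| + |q-1| + 2*|m-1| := by
    have a1 := neg_abs_le (m-1); have a2 := le_abs_self (m-1)
    have b1 := neg_abs_le (p-1); have b2 := le_abs_self (p-1)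
    have c1 := neg_abs_le (q-1); have c2 := le_abs_self (q-1)
    rw [abs_le]; constructor <;> linarith
  have hτ2 : τ^2 ≤ 1 := by nlinarith
  nlinarith [abs_nonneg (p-1), abs_nonneg (q-1), abs_nonneg (m-1),
    mul_nonneg hτ0 (abs_nonneg (3*(m-1) - 2*(p-1) - (q-1))),
    mul_nonneg (sq_nonneg τ) (abs_nonneg ((p-1) + (q-1) - 2*(m-1)))]

/-! ### The mollified local diffeomorphism on one mesh interval -/

/-- Local model of the diffeomorphism on one mesh interval, away from the smoothing zones. -/
def d0 (G : ℝ → ℝ) (s a : ℝ) (x : ℝ) : ℝ := a + (G x - G a)/s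
def d0D (G : ℝ → ℝ) (s : ℝ) (x : ℝ) : ℝ := deriv G x / s

/-- The mollified diffeomorphism on one mesh interval `[a,b]`, with smoothing zones of
width `δ` at both endpoints. -/
def pc (G : ℝ → ℝ) (s a b δ : ℝ) (x : ℝ) : ℝ :=
  if x < a + δ then herm a δ a (d0 G s a (a+δ)) 1 (d0D G s (a+δ)) x
  else if x ≤ b - δ then d0 G s a x
  else herm (b-δ) δ (d0 G s a (b-δ)) b (d0D G s (b-δ)) 1 x

def pcD (G : ℝ → ℝ) (s a b δ : ℝ) (x : ℝ) : ℝ :=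
  if x < a + δ then hermD a δ a (d0 G s a (a+δ)) 1 (d0D G s (a+δ)) x
  else if x ≤ b - δ then d0D G s x
  else hermD (b-δ) δ (d0 G s a (b-δ)) b (d0D G s (b-δ)) 1 x

section piece
variable {G : ℝ → ℝ} {s a b δ : ℝ}

lemma hasDerivAt_d0 (hG : Differentiable ℝ G) (x : ℝ) :
    HasDerivAt (d0 G s a) (d0D G s x) x := by
  have := (((hG x).hasDerivAt.sub_const (G a)).div_const s).const_add a
  exact this

lemma pc_left (hδ : 0 < δ) : pc G s a b δ a = a := by
  rw [pc, if_pos (by linarith)]; exact herm_left _ _ _ _ _ _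

lemma pcD_left (hδ : 0 < δ) : pcD G s a b δ a = 1 := by
  rw [pcD, if_pos (by linarith)]; exact hermD_left _ _ _ _ _ _

lemma pc_right (hδ : 0 < δ) (h2δ : 2*δ < b - a) : pc G s a b δ b = b := by
  rw [pc, if_neg (by linarith), if_neg (by linarith)]
  have h := herm_right (b-δ) δ (d0 G s a (b-δ)) b (d0D G s (b-δ)) 1 hδ.ne'
  rwa [show b - δ + δ = b by ring] at h

lemma pcD_right (hδ : 0 < δ) (h2δ : 2*δ < b - a) : pcD G s a b δ b = 1 := by
  rw [pcD, if_neg (by linarith), if_neg (by linarith)]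
  have h := hermD_right (b-δ) δ (d0 G s a (b-δ)) b (d0D G s (b-δ)) 1 hδ.ne'
  rwa [show b - δ + δ = b by ring] at h

lemma pc_mid {x : ℝ} (h1 : a + δ ≤ x) (h2 : x ≤ b - δ) : pc G s a b δ x = d0 G s a x := by
  rw [pc, if_neg (by linarith), if_pos h2]

lemma pcD_mid {x : ℝ} (h1 : a + δ ≤ x) (h2 : x ≤ b - δ) : pcD G s a b δ x = d0D G s x := by
  rw [pcD, if_neg (by linarith), if_pos h2]

lemma pcD_bound (hδ : 0 < δ) (h2δ : 2*δ < b - a) {E : ℝ}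
    (hd : ∀ x ∈ Icc a b, |d0D G s x - 1| ≤ E)
    (hm1 : |(d0 G s a (a+δ) - a)/δ - 1| ≤ E)
    (hm2 : |(b - d0 G s a (b-δ))/δ - 1| ≤ E) :
    ∀ x ∈ Icc a b, |pcD G s a b δ x - 1| ≤ 25*E := by
  intro x hx
  have hE : 0 ≤ E := le_trans (abs_nonneg _) hm1
  rcases lt_or_ge x (a + δ) with h1 | h1
  · rw [pcD, if_pos h1]
    have hb := hermD_bound a δ a (d0 G s a (a+δ)) 1 (d0D G s (a+δ)) hδ
      (x := x) ⟨hx.1, by linarith⟩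
    have hq : |d0D G s (a+δ) - 1| ≤ E := hd _ ⟨by linarith, by linarith⟩
    simp only [sub_self, abs_zero, mul_zero] at hb
    linarith
  · rcases le_or_gt x (b - δ) with h2 | h2
    · rw [pcD, if_neg (by linarith), if_pos h2]
      exact le_trans (hd x hx) (by linarith)
    · rw [pcD, if_neg (by linarith), if_neg (by linarith)]
      have hb := hermD_bound (b-δ) δ (d0 G s a (b-δ)) b (d0D G s (b-δ)) 1 hδ
        (x := x) ⟨h2.le, by linarith [hx.2]⟩
      have hp : |d0D G s (b-δ) - 1| ≤ E := hd _ ⟨by linarith, by linarith⟩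
      simp only [sub_self, abs_zero, mul_zero] at hb
      linarith

/-- The local structure of `pc`: near every point of `[a,b]` it is given on the left and on
the right by globally `C¹` models with continuous derivative models. -/
lemma piece_local (hG : Differentiable ℝ G) (hG' : Continuous (deriv G))
    (hδ : 0 < δ) (h2δ : 2*δ < b - a) {x : ℝ} (hx : x ∈ Icc a b) :
    ∃ ε > 0, ∃ Fl Fr Dl Dr : ℝ → ℝ,
      (∀ y ∈ Icc a b, x - ε < y → y ≤ x → pc G s a b δ y = Fl y ∧ pcD G s a b δ y = Dl y) ∧
      (∀ y ∈ Icc a b, x ≤ y → y < x + ε → pc G s a b δ y = Fr y ∧ pcD G s a b δ y = Dr y) ∧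
      HasDerivAt Fl (Dl x) x ∧ HasDerivAt Fr (Dr x) x ∧
      ContinuousAt Dl x ∧ ContinuousAt Dr x ∧
      Dl x = pcD G s a b δ x ∧ Dr x = pcD G s a b δ x := by
  obtain ⟨hax, hxb⟩ := hx
  rcases lt_or_ge x (a + δ) with h1 | h1
  · set F := herm a δ a (d0 G s a (a+δ)) 1 (d0D G s (a+δ)) with hF
    set D := hermD a δ a (d0 G s a (a+δ)) 1 (d0D G s (a+δ)) with hD
    have hbr : ∀ y : ℝ, y < a + δ → pc G s a b δ y = F y ∧ pcD G s a b δ y = D y := by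
      intro y hy; rw [pc, if_pos hy, pcD, if_pos hy]; exact ⟨rfl, rfl⟩
    refine ⟨a + δ - x, by linarith, F, F, D, D,
      fun y _ _ hy2 => hbr y (by linarith),
      fun y _ _ hy2 => hbr y (by linarith),
      hasDerivAt_herm _ _ _ _ _ _ _, hasDerivAt_herm _ _ _ _ _ _ _,
      (continuous_hermD _ _ _ _ _ _).continuousAt, (continuous_hermD _ _ _ _ _ _).continuousAt,
      (hbr x h1).2.symm, (hbr x h1).2.symm⟩
  · rcases lt_trichotomy x (b - δ) with h2 | h2 | h2
    · rcases eq_or_lt_of_le h1 with h1e | h1l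
      · set F := herm a δ a (d0 G s a (a+δ)) 1 (d0D G s (a+δ)) with hF
        set D := hermD a δ a (d0 G s a (a+δ)) 1 (d0D G s (a+δ)) with hD
        have hpcx : pc G s a b δ x = d0 G s a x := pc_mid h1e.le h2.le
        have hpcDx : pcD G s a b δ x = d0D G s x := pcD_mid h1e.le h2.le
        have hFx : F x = pc G s a b δ x := by
          rw [hpcx, hF, ← h1e, herm_right _ _ _ _ _ _ hδ.ne', h1e]
        have hDx : D x = pcD G s a b δ x := by
          rw [hpcDx, hD, ← h1e, hermD_right _ _ _ _ _ _ hδ.ne', h1e]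
        refine ⟨min δ (b - δ - x), by simp [hδ]; linarith, F, d0 G s a, D, d0D G s,
          ?_, ?_, hasDerivAt_herm _ _ _ _ _ _ _, hasDerivAt_d0 hG x,
          (continuous_hermD _ _ _ _ _ _).continuousAt, (hG'.continuousAt).div_const s,
          hDx, hpcDx.symm⟩
        · intro y _ hy1 hy2
          rcases eq_or_lt_of_le hy2 with rfl | hy2
          · exact ⟨hFx.symm, hDx.symm⟩
          · have : y < a + δ := by rw [h1e]; exact hy2
            rw [pc, if_pos this, pcD, if_pos this]; exact ⟨rfl, rfl⟩
        · intro y _ hy1 hy2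
          have hy3 : y ≤ b - δ := by
            have := min_le_right δ (b - δ - x); linarith
          exact ⟨pc_mid (h1e.le.trans hy1) hy3, pcD_mid (h1e.le.trans hy1) hy3⟩
      · refine ⟨min (x - (a+δ)) (b - δ - x), by simp; constructor <;> linarith,
          d0 G s a, d0 G s a, d0D G s, d0D G s, ?_, ?_,
          hasDerivAt_d0 hG x, hasDerivAt_d0 hG x,
          (hG'.continuousAt).div_const s, (hG'.continuousAt).div_const s,
          (pcD_mid h1 h2.le).symm, (pcD_mid h1 h2.le).symm⟩
        · intro y _ hy1 hy2
          have : x - min (x - (a+δ)) (b - δ - x) ≥ a + δ := by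
            have := min_le_left (x - (a+δ)) (b - δ - x); linarith
          exact ⟨pc_mid (by linarith) (by linarith), pcD_mid (by linarith) (by linarith)⟩
        · intro y _ hy1 hy2
          have : x + min (x - (a+δ)) (b - δ - x) ≤ b - δ := by
            have := min_le_right (x - (a+δ)) (b - δ - x); linarith
          exact ⟨pc_mid (by linarith) (by linarith), pcD_mid (by linarith) (by linarith)⟩
    · set F := herm (b-δ) δ (d0 G s a (b-δ)) b (d0D G s (b-δ)) 1 with hF
      set D := hermD (b-δ) δ (d0 G s a (b-δ)) b (d0D G s (b-δ)) 1 with hD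
      have hpcx : pc G s a b δ x = d0 G s a x := pc_mid (by linarith) h2.le
      have hpcDx : pcD G s a b δ x = d0D G s x := pcD_mid (by linarith) h2.le
      have hFx : F x = pc G s a b δ x := by rw [hpcx, hF, h2, herm_left]
      have hDx : D x = pcD G s a b δ x := by rw [hpcDx, hD, h2, hermD_left]
      refine ⟨min δ (x - (a + δ)), by simp [hδ]; linarith, d0 G s a, F, d0D G s, D,
        ?_, ?_, hasDerivAt_d0 hG x, hasDerivAt_herm _ _ _ _ _ _ _,
        (hG'.continuousAt).div_const s,
        (continuous_hermD _ _ _ _ _ _).continuousAt, hpcDx.symm, hDx⟩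
      · intro y _ hy1 hy2
        have : x - min δ (x - (a+δ)) ≥ a + δ := by
          have := min_le_right δ (x - (a+δ)); linarith
        exact ⟨pc_mid (by linarith) (by linarith [h2 ▸ hy2]),
               pcD_mid (by linarith) (by linarith [h2 ▸ hy2])⟩
      · intro y _ hy1 hy2
        rcases eq_or_lt_of_le hy1 with rfl | hy1
        · exact ⟨hFx.symm, hDx.symm⟩
        · have hne : ¬ y ≤ b - δ := by rw [← h2]; linarith
          have hne2 : ¬ y < a + δ := by push_neg; linarith
          rw [pc, if_neg hne2, if_neg hne, pcD, if_neg hne2, if_neg hne]; exact ⟨rfl, rfl⟩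
    · set F := herm (b-δ) δ (d0 G s a (b-δ)) b (d0D G s (b-δ)) 1 with hF
      set D := hermD (b-δ) δ (d0 G s a (b-δ)) b (d0D G s (b-δ)) 1 with hD
      have hbr : ∀ y : ℝ, b - δ < y → pc G s a b δ y = F y ∧ pcD G s a b δ y = D y := by
        intro y hy
        have hne : ¬ y ≤ b - δ := by linarith
        have hne2 : ¬ y < a + δ := by push_neg; linarith
        rw [pc, if_neg hne2, if_neg hne, pcD, if_neg hne2, if_neg hne]; exact ⟨rfl, rfl⟩
      refine ⟨x - (b - δ), by linarith, F, F, D, D,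
        fun y _ hy1 _ => hbr y (by linarith),
        fun y _ hy1 _ => hbr y (by linarith),
        hasDerivAt_herm _ _ _ _ _ _ _, hasDerivAt_herm _ _ _ _ _ _ _,
        (continuous_hermD _ _ _ _ _ _).continuousAt, (continuous_hermD _ _ _ _ _ _).continuousAt,
        (hbr x h2).2.symm, (hbr x h2).2.symm⟩

end piece

/-! ### Gluing lemmas -/

lemma glue {f ρ : ℝ → ℝ} {lo hi x ε : ℝ} (hx : x ∈ Icc lo hi) (hε : 0 < ε)
    {Fl Fr Dl Dr : ℝ → ℝ}
    (hfl : ∀ y ∈ Icc lo hi, x - ε < y → y ≤ x → f y = Fl y ∧ ρ y = Dl y)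
    (hfr : ∀ y ∈ Icc lo hi, x ≤ y → y < x + ε → f y = Fr y ∧ ρ y = Dr y)
    (hFl : HasDerivAt Fl (Dl x) x) (hFr : HasDerivAt Fr (Dr x) x)
    (hDl : ContinuousAt Dl x) (hDr : ContinuousAt Dr x)
    (hDlx : Dl x = ρ x) (hDrx : Dr x = ρ x) :
    HasDerivWithinAt f (ρ x) (Icc lo hi) x ∧ ContinuousWithinAt ρ (Icc lo hi) x := by
  have hU : Ioo (x - ε) (x + ε) ∈ 𝓝 x := Ioo_mem_nhds (by linarith) (by linarith)
  set L := Icc lo hi ∩ Iic x with hL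
  set R := Icc lo hi ∩ Ici x with hR
  have hLs : ∀ y ∈ L ∩ Ioo (x - ε) (x + ε), f y = Fl y ∧ ρ y = Dl y := by
    rintro y ⟨⟨hy1, hy2⟩, hy3, _⟩; exact hfl y hy1 hy3 hy2
  have hRs : ∀ y ∈ R ∩ Ioo (x - ε) (x + ε), f y = Fr y ∧ ρ y = Dr y := by
    rintro y ⟨⟨hy1, hy2⟩, _, hy4⟩; exact hfr y hy1 hy2 hy4
  have hxl : f x = Fl x ∧ ρ x = Dl x := hfl x hx (by linarith) le_rfl
  have hxr : f x = Fr x ∧ ρ x = Dr x := hfr x hx le_rfl (by linarith)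
  have hdL : HasDerivWithinAt f (ρ x) L x := by
    rw [← hasDerivWithinAt_inter hU]
    exact ((hDlx ▸ hFl.hasDerivWithinAt).congr (fun y hy => (hLs y hy).1) hxl.1)
  have hdR : HasDerivWithinAt f (ρ x) R x := by
    rw [← hasDerivWithinAt_inter hU]
    exact ((hDrx ▸ hFr.hasDerivWithinAt).congr (fun y hy => (hRs y hy).1) hxr.1)
  have hcL : ContinuousWithinAt ρ L x := by
    rw [← continuousWithinAt_inter hU]
    exact (hDl.continuousWithinAt).congr (fun y hy => (hLs y hy).2) hxl.2
  have hcR : ContinuousWithinAt ρ R x := by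
    rw [← continuousWithinAt_inter hU]
    exact (hDr.continuousWithinAt).congr (fun y hy => (hRs y hy).2) hxr.2
  have hunion : L ∪ R = Icc lo hi := by
    rw [hL, hR, ← inter_union_distrib_left, Iic_union_Ici, inter_univ]
  exact ⟨hunion ▸ hdL.union hdR, hunion ▸ hcL.union hcR⟩

lemma rightLim_eqOn {g G : ℝ → ℝ} {a b : ℝ} (hab : a < b) (hG : Continuous G)
    (heq : ∀ y ∈ Ioo a b, g y = G y) : Function.rightLim g a = G a := by
  refine rightLim_eq_of_tendsto ?_
  refine Tendsto.congr' ?_ ((hG.tendsto a).mono_left nhdsWithin_le_nhds)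
  filter_upwards [Ioo_mem_nhdsGT_of_mem (left_mem_Ico.2 hab)] with y hy
  exact (heq y hy).symm

lemma leftLim_eqOn {g G : ℝ → ℝ} {a b : ℝ} (hab : a < b) (hG : Continuous G)
    (heq : ∀ y ∈ Ioo a b, g y = G y) : Function.leftLim g b = G b := by
  refine leftLim_eq_of_tendsto ?_
  refine Tendsto.congr' ?_ ((hG.tendsto b).mono_left nhdsWithin_le_nhds)
  filter_upwards [Ioo_mem_nhdsLT_of_mem (right_mem_Ioc.2 hab)] with y hy
  exact (heq y hy).symm

lemma mesh_mono {M : ℕ} {w : ℕ → ℝ} (hwm : ∀ j ≤ M, w j < w (j + 1)) :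
    ∀ j j', j ≤ j' → j' ≤ M + 1 → w j ≤ w j' := by
  intro j j' hjj' hj'
  induction j' with
  | zero => simp [Nat.le_zero.mp hjj']
  | succ n ih =>
    rcases Nat.lt_or_ge j (n + 1) with h | h
    · exact le_trans (ih (by omega) (by omega)) (hwm n (by omega)).le
    · have hj : j = n + 1 := by omega
      simp [hj]

set_option maxHeartbeats 1000000 in
/--
the linear spline interpolant `𝔏_θ` of a piecewise `C²` uniformly
expanding map `g` of `[0,1]` on a mesh of maximal step `θ` is close to `g` in
Keller's distance: there are `c > 0` and a set `B_θ` with `m(B_θ) > 1 − c√θ` and a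
`C¹` diffeomorphism `d_θ` of `[0,1]` with `g = 𝔏_θ ∘ d_θ` on `B_θ`,
`|d_θ(x) − x| < c√θ` and `|1/d_θ'(x) − 1| < c√θ`; in particular
`𝔡(g, 𝔏_θ) ≤ c√θ`.
-/
theorem linear_spline_keller_distance
    (g : ℝ → ℝ) (η : ℝ) (hη : 1 < η) (nz : ℕ) (z : ℕ → ℝ)
    (hz0 : z 0 = 0) (hzlast : z (nz + 1) = 1)
    (hz_mono : ∀ i ≤ nz, z i < z (i + 1))
    -- g is piecewise C² w.r.t. the mesh z, uniformly expanding with |g'| ≥ η on each piece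
    (hgC2 : ∀ i ≤ nz, ∃ G : ℝ → ℝ, ContDiff ℝ 2 G ∧
      Set.EqOn g G (Set.Ioo (z i) (z (i + 1))) ∧
      ∀ x ∈ Set.Ioo (z i) (z (i + 1)), η ≤ |deriv G x|)
    (hg_maps : Set.MapsTo g (Set.Icc 0 1) (Set.Icc 0 1)) :
    ∃ c > (0:ℝ), ∃ θ₀ > (0:ℝ), ∀ θ : ℝ, 0 < θ → θ ≤ θ₀ →
      ∀ (M : ℕ) (w : ℕ → ℝ),
        -- w is a refinement of the mesh z, with maximal step ≤ θ
        w 0 = 0 → w (M + 1) = 1 →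
        (∀ j ≤ M, w j < w (j + 1)) →
        (∀ j ≤ M, w (j + 1) - w j ≤ θ) →
        (∀ i ≤ nz + 1, ∃ j ≤ M + 1, w j = z i) →
        -- 𝔏 is the piecewise linear interpolant of g on the mesh w
        ∀ 𝔏 : ℝ → ℝ,
          (∀ j ≤ M, ∀ x ∈ Set.Ico (w j) (w (j + 1)),
            𝔏 x = ((w (j + 1) - x) * Function.rightLim g (w j) +
                    (x - w j) * Function.leftLim g (w (j + 1))) / (w (j + 1) - w j)) →
          𝔏 1 = Function.leftLim g 1 →
          ∃ B : Set ℝ, MeasurableSet B ∧ B ⊆ Set.Icc 0 1 ∧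
            (volume B).toReal > 1 - c * Real.sqrt θ ∧
            ∃ d : ℝ → ℝ, ContDiffOn ℝ 1 d (Set.Icc 0 1) ∧
              StrictMonoOn d (Set.Icc 0 1) ∧
              d '' Set.Icc 0 1 = Set.Icc 0 1 ∧
              (∀ x ∈ B, g x = 𝔏 (d x)) ∧
              (∀ x ∈ Set.Icc (0:ℝ) 1, |d x - x| < c * Real.sqrt θ) ∧
              (∀ x ∈ Set.Icc (0:ℝ) 1,
                |1 / derivWithin d (Set.Icc 0 1) x - 1| < c * Real.sqrt θ) ∧
              kellerDist g 𝔏 ≤ c * Real.sqrt θ := by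
  classical
  -- Step 0: choose the C² extensions and a uniform Lipschitz constant for their derivatives
  have hGG' : ∀ i : ℕ, ∃ G : ℝ → ℝ, ContDiff ℝ 2 G ∧
      (i ≤ nz → (Set.EqOn g G (Set.Ioo (z i) (z (i + 1))) ∧
        ∀ x ∈ Set.Ioo (z i) (z (i + 1)), η ≤ |deriv G x|)) := by
    intro i
    by_cases h : i ≤ nz
    · obtain ⟨G, h1, h2, h3⟩ := hgC2 i h
      exact ⟨G, h1, fun _ => ⟨h2, h3⟩⟩
    · exact ⟨id, contDiff_id, fun h' => absurd h' h⟩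
  choose GG hGsm hGp using hGG'
  have hGdiff : ∀ i, Differentiable ℝ (GG i) := fun i =>
    (hGsm i).differentiable (by norm_num)
  have hGderiv : ∀ i, Continuous (deriv (GG i)) := fun i =>
    (hGsm i).continuous_deriv (by norm_num)
  have hKex : ∀ i : ℕ, ∃ Ki : ℝ, 0 ≤ Ki ∧ ∀ x ∈ Icc (0:ℝ) 1, ∀ y ∈ Icc (0:ℝ) 1,
      |deriv (GG i) x - deriv (GG i) y| ≤ Ki * |x - y| := by
    intro i
    have hd1 : ContDiff ℝ 1 (deriv (GG i)) := by
      have h2 := hGsm i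
      rw [show (2 : WithTop ℕ∞) = 1 + 1 by norm_num, contDiff_succ_iff_deriv] at h2
      exact h2.2.2
    have hcont2 : Continuous (deriv (deriv (GG i))) := hd1.continuous_deriv le_rfl
    obtain ⟨C, hC⟩ := (isCompact_Icc (a := (0:ℝ)) (b := 1)).exists_bound_of_continuousOn
      hcont2.continuousOn
    refine ⟨max C 0, le_max_right _ _, ?_⟩
    intro x hx y hy
    have key := Convex.norm_image_sub_le_of_norm_hasDerivWithin_le
      (f := deriv (GG i)) (f' := deriv (deriv (GG i))) (s := Icc (0:ℝ) 1) (C := max C 0)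
      (fun t _ => ((hd1.differentiable one_ne_zero) t).hasDerivAt.hasDerivWithinAt)
      (fun t ht => le_trans (hC t ht) (le_max_left C 0)) (convex_Icc 0 1) hy hx
    rw [Real.norm_eq_abs, Real.norm_eq_abs] at key
    exact key
  choose Kf hKf0 hKf using hKex
  set K : ℝ := max ((Finset.range (nz+1)).sup' ⟨0, by simp⟩ Kf) 0 with hKdef
  have hK0 : 0 ≤ K := le_max_right _ _
  have hKfK : ∀ i ≤ nz, Kf i ≤ K := fun i hi =>
    le_trans (Finset.le_sup' Kf (by simp; omega)) (le_max_left _ _)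
  refine ⟨50*K + 60, by linarith, min 1 (1/(60*(K+1))), by positivity, ?_⟩
  intro θ hθ0 hθ₀ M w hw0 hw1 hwm hwθ href 𝔏 h𝔏 h𝔏1
  set c : ℝ := 50*K + 60 with hcdef
  have hc1 : 1 ≤ c := by linarith
  have hθ1 : θ ≤ 1 := le_trans hθ₀ (min_le_left _ _)
  have hθK : θ ≤ 1/(60*(K+1)) := le_trans hθ₀ (min_le_right _ _)
  set q : ℝ := Real.sqrt θ with hqdef
  have hq0 : 0 < q := Real.sqrt_pos.mpr hθ0
  have hq1 : q ≤ 1 := by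
    rw [hqdef, show (1:ℝ) = Real.sqrt 1 by simp]
    exact Real.sqrt_le_sqrt hθ1
  have hθq : θ ≤ q := by nlinarith [Real.sq_sqrt hθ0.le]
  have hKθ : 25*(K*θ) ≤ 5/12 := by
    have h1 : 25*(K*θ) ≤ 25*(K*(1/(60*(K+1)))) := by
      have : K*θ ≤ K*(1/(60*(K+1))) := mul_le_mul_of_nonneg_left hθK hK0
      linarith
    have h2 : 25*(K*(1/(60*(K+1)))) ≤ 5/12 := by
      rw [mul_one_div, ← mul_div_assoc, div_le_iff₀ (by positivity)]
      ring_nf; nlinarith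
    linarith
  -- Step 1: mesh facts
  have wmono := mesh_mono hwm
  have hw_mem : ∀ j ≤ M + 1, w j ∈ Icc (0:ℝ) 1 := fun j hj =>
    ⟨hw0 ▸ wmono 0 j (by omega) hj, hw1 ▸ wmono j (M+1) hj le_rfl⟩
  -- the z-piece containing each w-interval
  set Iz : ℕ → ℕ := fun k => Nat.findGreatest (fun i => z i ≤ w k) nz with hIzdef
  have hIzle : ∀ k, Iz k ≤ nz := fun k => Nat.findGreatest_le nz
  have hIzlo : ∀ k ≤ M, z (Iz k) ≤ w k := by
    intro k hk
    have h0 : z 0 ≤ w k := by rw [hz0]; exact (hw_mem k (by omega)).1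
    exact Nat.findGreatest_spec (P := fun i => z i ≤ w k) (Nat.zero_le nz) h0
  have hIzhi : ∀ k ≤ M, w (k+1) ≤ z (Iz k + 1) := by
    intro k hk
    by_cases hik : Iz k = nz
    · rw [hik, hzlast, ← hw1]; exact wmono (k+1) (M+1) (by omega) le_rfl
    · have hlt : Iz k < nz := lt_of_le_of_ne (hIzle k) hik
      have hnP : ¬ z (Iz k + 1) ≤ w k :=
        Nat.findGreatest_is_greatest (P := fun i => z i ≤ w k) (n := nz)
          (by exact Nat.lt_succ_self (Iz k)) (by omega)
      obtain ⟨j', hj'le, hj'⟩ := href (Iz k + 1) (by omega)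
      have hwk : w k < w j' := by rw [hj']; exact not_le.mp hnP
      have hkj : k + 1 ≤ j' := by
        by_contra hc
        push_neg at hc
        exact absurd (wmono j' k (by omega) (by omega)) (not_le.mpr hwk)
      rw [← hj']; exact wmono (k+1) j' hkj hj'le
  have hsub : ∀ k ≤ M, Ioo (w k) (w (k+1)) ⊆ Ioo (z (Iz k)) (z (Iz k + 1)) :=
    fun k hk => Ioo_subset_Ioo (hIzlo k hk) (hIzhi k hk)
  have hgeq : ∀ k ≤ M, ∀ x ∈ Ioo (w k) (w (k+1)), g x = GG (Iz k) x :=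
    fun k hk x hx => (hGp (Iz k) (hIzle k)).1 (hsub k hk hx)
  -- Step 2: per-piece data and analytic bounds
  set S : ℕ → ℝ := fun k => (GG (Iz k) (w (k+1)) - GG (Iz k) (w k)) / (w (k+1) - w k) with hSdef
  set dd : ℕ → ℝ := fun k => (q/4) * (w (k+1) - w k) with hdddef
  have hh : ∀ k ≤ M, 0 < w (k+1) - w k ∧ w (k+1) - w k ≤ θ :=
    fun k hk => ⟨by linarith [hwm k hk], hwθ k hk⟩
  have hδpos : ∀ k ≤ M, 0 < dd k := fun k hk => by
    have := (hh k hk).1; simp only [hdddef]; positivity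
  have h2δ : ∀ k ≤ M, 2 * dd k < w (k+1) - w k := by
    intro k hk
    have h1 := (hh k hk).1
    simp only [hdddef]
    have h3 : q * (w (k+1) - w k) ≤ 1 * (w (k+1) - w k) := mul_le_mul_of_nonneg_right hq1 h1.le
    linarith
  have hslope : ∀ k ≤ M, ∃ ξ ∈ Ioo (w k) (w (k+1)), deriv (GG (Iz k)) ξ = S k := by
    intro k hk
    obtain ⟨ξ, hξ, hξeq⟩ := exists_deriv_eq_slope (a := w k) (b := w (k+1)) (GG (Iz k))
      (by linarith [(hh k hk).1])
      ((hGdiff (Iz k)).continuous.continuousOn) ((hGdiff (Iz k)).differentiableOn)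
    exact ⟨ξ, hξ, hξeq⟩
  have hSη : ∀ k ≤ M, η ≤ |S k| := by
    intro k hk
    obtain ⟨ξ, hξ, hξeq⟩ := hslope k hk
    rw [← hξeq]
    exact (hGp (Iz k) (hIzle k)).2 ξ (hsub k hk hξ)
  have hSne : ∀ k ≤ M, S k ≠ 0 := by
    intro k hk h0
    have := hSη k hk
    rw [h0] at this
    simp at this
    linarith
  have hIcc01 : ∀ k ≤ M, Icc (w k) (w (k+1)) ⊆ Icc (0:ℝ) 1 := fun k hk =>
    Icc_subset_Icc (hw_mem k (by omega)).1 (hw_mem (k+1) (by omega)).2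
  -- the fundamental derivative estimate
  have hd0Db : ∀ k ≤ M, ∀ x ∈ Icc (w k) (w (k+1)),
      |d0D (GG (Iz k)) (S k) x - 1| ≤ K*θ := by
    intro k hk x hx
    obtain ⟨ξ, hξ, hξeq⟩ := hslope k hk
    have hx01 := hIcc01 k hk hx
    have hξ01 := hIcc01 k hk (Ioo_subset_Icc_self hξ)
    have hlip := hKf (Iz k) x hx01 ξ hξ01
    have hη1 : (1:ℝ) ≤ |S k| := le_trans hη.le (hSη k hk)
    have hSne' : S k ≠ 0 := hSne k hk
    have e : d0D (GG (Iz k)) (S k) x - 1 = (deriv (GG (Iz k)) x - S k)/(S k) := by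
      rw [d0D]; field_simp
    rw [e, abs_div]
    have h1 : |deriv (GG (Iz k)) x - S k| ≤ K*θ := by
      rw [← hξeq]
      refine le_trans hlip ?_
      have hKle := hKfK (Iz k) (hIzle k)
      have hxy : |x - ξ| ≤ θ := by
        have h2 := (hh k hk).2
        rw [abs_le]
        constructor
        · have := hξ.2; have := hx.1; linarith
        · have := hξ.1; have := hx.2; linarith
      calc Kf (Iz k)*|x-ξ| ≤ K*|x-ξ| := mul_le_mul_of_nonneg_right hKle (abs_nonneg _)
        _ ≤ K*θ := mul_le_mul_of_nonneg_left hxy hK0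
    exact le_trans (div_le_self (abs_nonneg _) hη1) h1
  have hm1 : ∀ k ≤ M,
      |(d0 (GG (Iz k)) (S k) (w k) (w k + dd k) - w k)/(dd k) - 1| ≤ K*θ := by
    intro k hk
    have hδ := hδpos k hk
    have h2 := h2δ k hk
    obtain ⟨ξ1, hξ1, hξ1eq⟩ := exists_deriv_eq_slope (a := w k) (b := w k + dd k)
      (GG (Iz k)) (by linarith)
      ((hGdiff (Iz k)).continuous.continuousOn) ((hGdiff (Iz k)).differentiableOn)
    have key : (d0 (GG (Iz k)) (S k) (w k) (w k + dd k) - w k)/(dd k)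
        = d0D (GG (Iz k)) (S k) ξ1 := by
      rw [d0, d0D, hξ1eq, show w k + dd k - w k = dd k by ring, add_sub_cancel_left,
        div_div, div_div, mul_comm]
    rw [key]
    exact hd0Db k hk ξ1 ⟨hξ1.1.le, by linarith [hξ1.2]⟩
  have hGne : ∀ k ≤ M, GG (Iz k) (w (k+1)) - GG (Iz k) (w k) ≠ 0 := by
    intro k hk h0
    apply hSne k hk
    simp only [hSdef]
    rw [h0, zero_div]
  have hd0b : ∀ k ≤ M, d0 (GG (Iz k)) (S k) (w k) (w (k+1)) = w (k+1) := by
    intro k hk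
    have hne : w (k+1) - w k ≠ 0 := ne_of_gt (hh k hk).1
    rw [d0]
    simp only [hSdef]
    field_simp [hGne k hk]
    ring
  have hm2 : ∀ k ≤ M,
      |(w (k+1) - d0 (GG (Iz k)) (S k) (w k) (w (k+1) - dd k))/(dd k) - 1| ≤ K*θ := by
    intro k hk
    have hδ := hδpos k hk
    have h2 := h2δ k hk
    obtain ⟨ξ2, hξ2, hξ2eq⟩ := exists_deriv_eq_slope (a := w (k+1) - dd k) (b := w (k+1))
      (GG (Iz k)) (by linarith)
      ((hGdiff (Iz k)).continuous.continuousOn) ((hGdiff (Iz k)).differentiableOn)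
    have hSb : S k * (w (k+1) - w k) = GG (Iz k) (w (k+1)) - GG (Iz k) (w k) := by
      simp only [hSdef]
      field_simp [(hh k hk).1.ne']
    have hnum : w (k+1) - d0 (GG (Iz k)) (S k) (w k) (w (k+1) - dd k)
        = (GG (Iz k) (w (k+1)) - GG (Iz k) (w (k+1) - dd k))/S k := by
      rw [d0, eq_div_iff (hSne k hk)]
      field_simp [hSne k hk]
      linear_combination hSb
    have key : (w (k+1) - d0 (GG (Iz k)) (S k) (w k) (w (k+1) - dd k))/(dd k)
        = d0D (GG (Iz k)) (S k) ξ2 := by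
      rw [hnum, d0D, hξ2eq, show w (k+1) - (w (k+1) - dd k) = dd k by ring,
        div_div, div_div, mul_comm]
    rw [key]
    exact hd0Db k hk ξ2 ⟨by linarith [hξ2.1], hξ2.2.le⟩
  set FF : ℕ → ℝ → ℝ := fun k => pc (GG (Iz k)) (S k) (w k) (w (k+1)) (dd k) with hFFdef
  set DF : ℕ → ℝ → ℝ := fun k => pcD (GG (Iz k)) (S k) (w k) (w (k+1)) (dd k) with hDFdef
  have hDFb : ∀ k ≤ M, ∀ x ∈ Icc (w k) (w (k+1)), |DF k x - 1| ≤ 25*(K*θ) := by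
    intro k hk
    exact pcD_bound (hδpos k hk) (h2δ k hk) (hd0Db k hk) (hm1 k hk) (hm2 k hk)
  -- Step 3: the global index function
  set Idx : ℝ → ℕ := fun x => Nat.findGreatest (fun j => w j ≤ x) M with hIdxdef
  have hIdxle : ∀ x, Idx x ≤ M := fun x => Nat.findGreatest_le M
  have hIdxlo : ∀ x, 0 ≤ x → w (Idx x) ≤ x := by
    intro x hx
    have h0 : w 0 ≤ x := by rw [hw0]; exact hx
    exact Nat.findGreatest_spec (P := fun j => w j ≤ x) (Nat.zero_le M) h0
  have hIdxhi : ∀ x, x < 1 → x < w (Idx x + 1) := by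
    intro x hx
    by_cases h : Idx x = M
    · rw [h, hw1]; exact hx
    · have := Nat.findGreatest_is_greatest (P := fun j => w j ≤ x) (n := M)
        (by exact Nat.lt_succ_self (Idx x)) (by have := hIdxle x; omega)
      exact not_le.mp this
  have hIdx_eq : ∀ k ≤ M, ∀ x, w k ≤ x → x < w (k+1) → Idx x = k := by
    intro k hk x h1 h2
    refine le_antisymm ?_ (Nat.le_findGreatest hk h1)
    by_contra hc
    push_neg at hc
    have hP : w (Idx x) ≤ x := Nat.findGreatest_spec (P := fun j => w j ≤ x) (m := k) hk h1
    have : w (k+1) ≤ w (Idx x) := wmono (k+1) (Idx x) (by omega) (by have := hIdxle x; omega)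
    linarith
  have hIdx1 : Idx 1 = M := by
    refine le_antisymm (hIdxle 1) (Nat.le_findGreatest le_rfl ?_)
    exact (hw_mem M (by omega)).2
  set d : ℝ → ℝ := fun x => FF (Idx x) x with hddef
  set P : ℝ → ℝ := fun x => DF (Idx x) x with hPdef
  have hdapp : ∀ x, d x = FF (Idx x) x := fun x => rfl
  have hPapp : ∀ x, P x = DF (Idx x) x := fun x => rfl
  have hdk : ∀ k x, Idx x = k → d x = FF k x := by
    intro k x h; rw [hdapp, h]
  have hPk : ∀ k x, Idx x = k → P x = DF k x := by
    intro k x h; rw [hPapp, h]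
  -- the global derivative bound
  have hPb : ∀ x ∈ Icc (0:ℝ) 1, |P x - 1| ≤ 25*(K*θ) := by
    intro x hx
    by_cases hx1 : x = 1
    · subst hx1
      rw [hPk M 1 hIdx1]
      have : DF M 1 = 1 := by
        conv_lhs => rw [show (1:ℝ) = w (M+1) from hw1.symm]
        exact pcD_right (hδpos M le_rfl) (h2δ M le_rfl)
      rw [this]; simp only [sub_self, abs_zero]; positivity
    · have hxlt : x < 1 := lt_of_le_of_ne hx.2 hx1
      have h1 := hIdxlo x hx.1
      have h2 := hIdxhi x hxlt
      exact hDFb (Idx x) (hIdxle x) x ⟨h1, h2.le⟩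
  have hPpos : ∀ x ∈ Icc (0:ℝ) 1, 7/12 ≤ P x := by
    intro x hx
    have h := abs_le.mp (hPb x hx)
    linarith [h.1]
  -- Step 4: the master local structure, giving differentiability
  have hloc : ∀ x ∈ Icc (0:ℝ) 1,
      HasDerivWithinAt d (P x) (Icc 0 1) x ∧ ContinuousWithinAt P (Icc 0 1) x := by
    intro x hx
    by_cases hx1 : x = 1
    · -- the right endpoint of [0,1]
      subst hx1
      have hwM1 : w M < 1 := by rw [← hw1]; exact hwm M le_rfl
      have hQ : (1:ℝ) ∈ Icc (w M) (w (M+1)) := ⟨hwM1.le, by rw [hw1]⟩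
      obtain ⟨ε, hε, Fl, Fr, Dl, Dr, hl, hr, hFl, hFr, hDl, hDr, hDlx, hDrx⟩ :=
        piece_local (hGdiff (Iz M)) (hGderiv (Iz M)) (hδpos M le_rfl) (h2δ M le_rfl) hQ
      have hε'0 : 0 < min ε (1 - w M) := lt_min hε (by linarith)
      have hmr := min_le_right ε (1 - w M)
      have hml := min_le_left ε (1 - w M)
      have hIdxy : ∀ y, 1 - min ε (1 - w M) < y → y ≤ 1 → Idx y = M := by
        intro y h1 h2
        rcases eq_or_lt_of_le h2 with h2e | h2l
        · rw [h2e]; exact hIdx1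
        · exact hIdx_eq M le_rfl y (by linarith) (by rw [hw1]; exact h2l)
      refine glue hx hε'0 ?_ ?_ hFl hFr hDl hDr ?_ ?_
      · intro y hy hy1 hy2
        have hIy := hIdxy y hy1 hy2
        have hyI : y ∈ Icc (w M) (w (M+1)) := ⟨by linarith, by rw [hw1]; exact hy2⟩
        have := hl y hyI (by linarith) hy2
        exact ⟨(hdk M y hIy).trans this.1, (hPk M y hIy).trans this.2⟩
      · intro y hy hy1 hy2
        have hy1' : y = 1 := le_antisymm hy.2 hy1
        subst hy1'
        have := hr 1 hQ le_rfl (by linarith)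
        exact ⟨(hdk M 1 hIdx1).trans this.1, (hPk M 1 hIdx1).trans this.2⟩
      · rw [hDlx]; exact (hPk M 1 hIdx1).symm
      · rw [hDrx]; exact (hPk M 1 hIdx1).symm
    · have hxlt : x < 1 := lt_of_le_of_ne hx.2 hx1
      obtain ⟨k, hkdef⟩ : ∃ k, Idx x = k := ⟨_, rfl⟩
      have hk : k ≤ M := hkdef ▸ hIdxle x
      have hxlo : w k ≤ x := hkdef ▸ hIdxlo x hx.1
      have hxhi : x < w (k+1) := hkdef ▸ hIdxhi x hxlt
      by_cases hxw : w k < x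
      · -- interior of the k-th mesh interval
        have hQ : x ∈ Icc (w k) (w (k+1)) := ⟨hxlo, hxhi.le⟩
        obtain ⟨ε, hε, Fl, Fr, Dl, Dr, hl, hr, hFl, hFr, hDl, hDr, hDlx, hDrx⟩ :=
          piece_local (hGdiff (Iz k)) (hGderiv (Iz k)) (hδpos k hk) (h2δ k hk) hQ
        set ε' := min ε (min (x - w k) (w (k+1) - x)) with hε'
        have hε'0 : 0 < ε' := lt_min hε (lt_min (by linarith) (by linarith))
        have hε'1 : ε' ≤ ε := min_le_left _ _
        have hε'2 : ε' ≤ x - w k :=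
          le_trans (min_le_right _ _) (min_le_left _ _)
        have hε'3 : ε' ≤ w (k+1) - x :=
          le_trans (min_le_right _ _) (min_le_right _ _)
        have hIdxy : ∀ y, x - ε' < y → y < x + ε' → Idx y = k := by
          intro y h1 h2
          exact hIdx_eq k hk y (by linarith) (by linarith)
        refine glue hx hε'0 ?_ ?_ hFl hFr hDl hDr ?_ ?_
        · intro y hy hy1 hy2
          have hIy := hIdxy y hy1 (by linarith)
          have hyI : y ∈ Icc (w k) (w (k+1)) := ⟨by linarith, by linarith⟩
          have := hl y hyI (by linarith) hy2
          exact ⟨(hdk k y hIy).trans this.1, (hPk k y hIy).trans this.2⟩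
        · intro y hy hy1 hy2
          have hIy := hIdxy y (by linarith) hy2
          have hyI : y ∈ Icc (w k) (w (k+1)) := ⟨by linarith, by linarith⟩
          have := hr y hyI hy1 (by linarith)
          exact ⟨(hdk k y hIy).trans this.1, (hPk k y hIy).trans this.2⟩
        · rw [hDlx]; exact (hPk k x hkdef).symm
        · rw [hDrx]; exact (hPk k x hkdef).symm
      · -- x is the knot w k
        have hxeq : x = w k := le_antisymm (not_lt.mp hxw) hxlo
        by_cases hk0 : k = 0
        · -- x = 0
          have hx0 : x = 0 := by rw [hxeq, hk0, hw0]
          have hQ : x ∈ Icc (w k) (w (k+1)) := ⟨hxeq.ge, by linarith [hwm k hk]⟩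
          obtain ⟨ε, hε, Fl, Fr, Dl, Dr, hl, hr, hFl, hFr, hDl, hDr, hDlx, hDrx⟩ :=
            piece_local (hGdiff (Iz k)) (hGderiv (Iz k)) (hδpos k hk) (h2δ k hk) hQ
          have hε'0 : 0 < min ε (w (k+1) - x) := lt_min hε (by linarith [hwm k hk])
          have hml := min_le_left ε (w (k+1) - x)
          have hmr := min_le_right ε (w (k+1) - x)
          refine glue hx hε'0 (Fl := Fr) (Dl := Dr) ?_ ?_ hFr hFr hDr hDr ?_ ?_
          · intro y hy hy1 hy2
            have hyx : y = x := le_antisymm hy2 (by rw [hx0]; exact hy.1)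
            subst hyx
            have := hr y hQ le_rfl (by linarith)
            exact ⟨(hdk k y hkdef).trans this.1, (hPk k y hkdef).trans this.2⟩
          · intro y hy hy1 hy2
            have hIy : Idx y = k := hIdx_eq k hk y (by linarith [hxeq]) (by linarith)
            have hyI : y ∈ Icc (w k) (w (k+1)) := ⟨by linarith [hxeq], by linarith⟩
            have := hr y hyI hy1 (by linarith)
            exact ⟨(hdk k y hIy).trans this.1, (hPk k y hIy).trans this.2⟩
          · rw [hDrx]; exact (hPk k x hkdef).symm
          · rw [hDrx]; exact (hPk k x hkdef).symm
        · -- x = w k is an interior knot: glue pieces k-1 and k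
          obtain ⟨k', rfl⟩ : ∃ k', k = k' + 1 := ⟨k - 1, by omega⟩
          have hk' : k' ≤ M := by omega
          have hwlt : w k' < w (k'+1) := hwm k' (by omega)
          have hwlt2 : w (k'+1) < w (k'+1+1) := hwm (k'+1) hk
          have hQl : x ∈ Icc (w k') (w (k'+1)) := ⟨by linarith [hxeq], hxeq.le⟩
          obtain ⟨εl, hεl, Fll, Flr, Dll, Dlr, hll, hlr, hFll, hFlr, hDll, hDlr, hDllx, hDlrx⟩ :=
            piece_local (hGdiff (Iz k')) (hGderiv (Iz k')) (hδpos k' hk') (h2δ k' hk') hQl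
          have hQr : x ∈ Icc (w (k'+1)) (w (k'+1+1)) := ⟨hxeq.ge, by linarith [hxeq]⟩
          obtain ⟨εr, hεr, Frl, Frr, Drl, Drr, hrl, hrr, hFrl, hFrr, hDrl, hDrr, hDrlx, hDrrx⟩ :=
            piece_local (hGdiff (Iz (k'+1))) (hGderiv (Iz (k'+1))) (hδpos (k'+1) hk)
              (h2δ (k'+1) hk) hQr
          set ε' := min (min εl εr) (min (x - w k') (w (k'+1+1) - x)) with hε'
          have hε'0 : 0 < ε' :=
            lt_min (lt_min hεl hεr) (lt_min (by linarith [hxeq]) (by linarith [hxeq]))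
          have hε'1 : ε' ≤ εl := le_trans (min_le_left _ _) (min_le_left _ _)
          have hε'2 : ε' ≤ εr := le_trans (min_le_left _ _) (min_le_right _ _)
          have hε'3 : ε' ≤ x - w k' := le_trans (min_le_right _ _) (min_le_left _ _)
          have hε'4 : ε' ≤ w (k'+1+1) - x := le_trans (min_le_right _ _) (min_le_right _ _)
          -- endpoint values
          have hFlval : FF k' x = x := by
            rw [hxeq]; exact pc_right (hδpos k' hk') (h2δ k' hk')
          have hFrval : FF (k'+1) x = x := by
            rw [hxeq]; exact pc_left (hδpos (k'+1) hk)
          have hDlval : DF k' x = 1 := by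
            rw [hxeq]; exact pcD_right (hδpos k' hk') (h2δ k' hk')
          have hDrval : DF (k'+1) x = 1 := by
            rw [hxeq]; exact pcD_left (hδpos (k'+1) hk)
          have hPx : P x = 1 := by rw [hPk (k'+1) x hkdef]; exact hDrval
          refine glue hx hε'0 (Fl := Fll) (Fr := Frr) (Dl := Dll) (Dr := Drr)
            ?_ ?_ hFll hFrr hDll hDrr ?_ ?_
          · -- left strip
            intro y hy hy1 hy2
            rcases eq_or_lt_of_le hy2 with he | hlt
            · subst he
              have h1 := hll y hQl (by linarith) le_rfl
              constructor
              · exact ((hdk (k'+1) y hkdef).trans (hFrval.trans hFlval.symm)).trans h1.1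
              · exact hPx.trans (hDlval.symm.trans h1.2)
            · have hyk : Idx y = k' :=
                hIdx_eq k' hk' y (by linarith) (by rw [← hxeq]; exact hlt)
              have hyI : y ∈ Icc (w k') (w (k'+1)) := ⟨by linarith, by rw [← hxeq]; exact hlt.le⟩
              have := hll y hyI (by linarith) hy2
              exact ⟨(hdk k' y hyk).trans this.1, (hPk k' y hyk).trans this.2⟩
          · -- right strip
            intro y hy hy1 hy2
            have hyk : Idx y = k' + 1 :=
              hIdx_eq (k'+1) hk y (by rw [← hxeq]; exact hy1) (by linarith)
            have hyI : y ∈ Icc (w (k'+1)) (w (k'+1+1)) := ⟨by rw [← hxeq]; exact hy1, by linarith⟩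
            have := hrr y hyI hy1 (by linarith)
            exact ⟨(hdk (k'+1) y hyk).trans this.1, (hPk (k'+1) y hyk).trans this.2⟩
          · -- Dll x = P x
            have h1 := hll x hQl (by linarith) le_rfl
            rw [hPx, ← hDlval]
            exact h1.2.symm
          · -- Drr x = P x
            rw [hPx, hDrrx, ← hDrval]
  -- Step 5: consequences
  have hderW : ∀ x ∈ Icc (0:ℝ) 1, derivWithin d (Icc 0 1) x = P x := fun x hx =>
    (hloc x hx).1.derivWithin (uniqueDiffOn_Icc one_pos x hx)
  have hdiffOn : DifferentiableOn ℝ d (Icc 0 1) := fun x hx =>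
    (hloc x hx).1.differentiableWithinAt
  have hcontOn : ContinuousOn d (Icc 0 1) := fun x hx =>
    (hloc x hx).1.continuousWithinAt
  have hPcont : ContinuousOn P (Icc 0 1) := fun x hx => (hloc x hx).2
  have hCD : ContDiffOn ℝ 1 d (Icc (0:ℝ) 1) := by
    rw [show (1 : WithTop ℕ∞) = 0 + 1 by norm_num]
    refine (contDiffOn_succ_iff_derivWithin (uniqueDiffOn_Icc one_pos)).mpr
      ⟨hdiffOn, ?_, ?_⟩
    · intro h; simp at h
    · rw [contDiffOn_zero]
      exact hPcont.congr hderW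
  have hmono : StrictMonoOn d (Icc (0:ℝ) 1) := by
    refine strictMonoOn_of_deriv_pos (convex_Icc 0 1) hcontOn ?_
    intro x hx
    rw [interior_Icc] at hx
    have hD : HasDerivAt d (P x) x :=
      ((hloc x (Ioo_subset_Icc_self hx)).1).hasDerivAt (Icc_mem_nhds hx.1 hx.2)
    rw [hD.deriv]
    linarith [hPpos x (Ioo_subset_Icc_self hx)]
  have hd0eq : d 0 = 0 := by
    have hI0 : Idx 0 = 0 := hIdx_eq 0 (Nat.zero_le M) 0 (by rw [hw0]) (by rw [← hw0]; exact hwm 0 (Nat.zero_le M))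
    rw [hdk 0 0 hI0]
    conv_lhs => rw [show (0:ℝ) = w 0 from hw0.symm]
    exact (pc_left (b := w 1) (hδpos 0 (Nat.zero_le M))).trans hw0
  have hd1eq : d 1 = 1 := by
    rw [hdk M 1 hIdx1]
    conv_lhs => rw [show (1:ℝ) = w (M+1) from hw1.symm]
    exact (pc_right (hδpos M le_rfl) (h2δ M le_rfl)).trans hw1
  have himg : d '' Icc (0:ℝ) 1 = Icc 0 1 := by
    apply Subset.antisymm
    · rintro _ ⟨x, hx, rfl⟩
      constructor
      · rcases eq_or_lt_of_le hx.1 with h | h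
        · rw [← h, hd0eq]
        · rw [← hd0eq]; exact (hmono (left_mem_Icc.2 one_pos.le) hx h).le
      · rcases eq_or_lt_of_le hx.2 with h | h
        · rw [h, hd1eq]
        · rw [← hd1eq]; exact (hmono hx (right_mem_Icc.2 one_pos.le) h).le
    · have := intermediate_value_Icc (one_pos.le : (0:ℝ) ≤ 1) hcontOn
      rw [hd0eq, hd1eq] at this
      exact this
  have hdist : ∀ x ∈ Icc (0:ℝ) 1, |d x - x| ≤ 25*(K*θ) := by
    intro x hx
    have hder2 : ∀ y ∈ Icc (0:ℝ) 1, HasDerivWithinAt (fun t => d t - t) (P y - 1) (Icc 0 1) y :=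
      fun y hy => (hloc y hy).1.sub ((hasDerivAt_id y).hasDerivWithinAt)
    have hbd : ∀ y ∈ Icc (0:ℝ) 1, ‖P y - 1‖ ≤ 25*(K*θ) := by
      intro y hy; rw [Real.norm_eq_abs]; exact hPb y hy
    have := Convex.norm_image_sub_le_of_norm_hasDerivWithin_le hder2 hbd (convex_Icc 0 1)
      (left_mem_Icc.2 one_pos.le) hx
    rw [hd0eq] at this
    simp only [sub_zero, Real.norm_eq_abs] at this
    calc |d x - x| ≤ 25*(K*θ) * |x| := this
      _ ≤ 25*(K*θ) * 1 := by
          apply mul_le_mul_of_nonneg_left _ (by positivity)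
          rw [abs_le]; constructor <;> [linarith [hx.1]; exact hx.2]
      _ = 25*(K*θ) := mul_one _
  have hinvb : ∀ x ∈ Icc (0:ℝ) 1, |1 / derivWithin d (Icc 0 1) x - 1| ≤ 50*(K*θ) := by
    intro x hx
    rw [hderW x hx]
    have h1 := hPb x hx
    have h2 := hPpos x hx
    have h3 : P x ≠ 0 := by linarith
    have key : 1 / P x - 1 = (1 - P x) / P x := by field_simp
    rw [key, abs_div, abs_of_pos (by linarith : (0:ℝ) < P x), div_le_iff₀ (by linarith)]
    have h4 : |1 - P x| ≤ 25*(K*θ) := by rw [abs_sub_comm]; exact h1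
    have hKθ0 : 0 ≤ K*θ := mul_nonneg hK0 hθ0.le
    have h5 : 50*(K*θ)*(7/12) ≤ 50*(K*θ)*(P x) :=
      mul_le_mul_of_nonneg_left h2 (by linarith)
    linarith
  have hstrictineq : 25*(K*θ) < c*q ∧ 50*(K*θ) < c*q := by
    have h1 : K*θ ≤ K*q := mul_le_mul_of_nonneg_left hθq hK0
    have hcq : c*q = 50*(K*q) + 60*q := by rw [hcdef]; ring
    have hKq0 : 0 ≤ K*q := mul_nonneg hK0 hq0.le
    constructor <;> linarith
  -- Step 6: the good set B and its volume
  set Bs : Set ℝ := ⋃ k ∈ Finset.range (M+1), Icc (w k + dd k) (w (k+1) - dd k) with hBdef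
  have hBmeas : MeasurableSet Bs :=
    (Finset.range (M+1)).measurableSet_biUnion (fun k _ => measurableSet_Icc)
  have hBsub : Bs ⊆ Icc (0:ℝ) 1 := by
    refine iUnion₂_subset fun k hk => ?_
    have hk' : k ≤ M := by simp at hk; omega
    refine Icc_subset_Icc ?_ ?_
    · have := (hw_mem k (by omega)).1; have := hδpos k hk'; linarith
    · have := (hw_mem (k+1) (by omega)).2; have := hδpos k hk'; linarith
  have hBvol : (volume Bs).toReal > 1 - c * q := by
    have hteles : ∑ k ∈ Finset.range (M+1), (w (k+1) - w k) = 1 := by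
      rw [Finset.sum_range_sub (f := w), hw1, hw0, sub_zero]
    set bad : Set ℝ := ⋃ k ∈ Finset.range (M+1),
      (Ico (w k) (w k + dd k) ∪ Ioc (w (k+1) - dd k) (w (k+1))) with hbaddef
    have hcov : Icc (0:ℝ) 1 ⊆ Bs ∪ bad := by
      intro x hx
      by_cases hx1 : x = 1
      · subst hx1
        refine Or.inr (Set.mem_biUnion (Finset.self_mem_range_succ M) (Or.inr ?_))
        constructor
        · rw [hw1]; linarith [hδpos M le_rfl]
        · rw [hw1]
      · have hxlt : x < 1 := lt_of_le_of_ne hx.2 hx1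
        have hklo := hIdxlo x hx.1
        have hkhi := hIdxhi x hxlt
        have hkM := hIdxle x
        have hmem : Idx x ∈ Finset.range (M+1) := by simp; omega
        rcases lt_or_ge x (w (Idx x) + dd (Idx x)) with h1 | h1
        · exact Or.inr (Set.mem_biUnion hmem (Or.inl ⟨hklo, h1⟩))
        · rcases le_or_gt x (w (Idx x + 1) - dd (Idx x)) with h2 | h2
          · exact Or.inl (Set.mem_biUnion hmem ⟨h1, h2⟩)
          · exact Or.inr (Set.mem_biUnion hmem (Or.inr ⟨h2, hkhi.le⟩))
    have hbadvol : volume bad ≤ ENNReal.ofReal (q/2) := by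
      calc volume bad
          ≤ ∑ k ∈ Finset.range (M+1),
            volume (Ico (w k) (w k + dd k) ∪ Ioc (w (k+1) - dd k) (w (k+1))) :=
            measure_biUnion_finset_le _ _
        _ ≤ ∑ k ∈ Finset.range (M+1), ENNReal.ofReal (2 * dd k) := by
            refine Finset.sum_le_sum fun k hk => ?_
            refine le_trans (measure_union_le _ _) ?_
            rw [Real.volume_Ico, Real.volume_Ioc,
              show w k + dd k - w k = dd k by ring,
              show w (k+1) - (w (k+1) - dd k) = dd k by ring,
              ← ENNReal.ofReal_add
                (le_of_lt (hδpos k (Nat.lt_succ_iff.mp (Finset.mem_range.mp hk))))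
                (le_of_lt (hδpos k (Nat.lt_succ_iff.mp (Finset.mem_range.mp hk))))]
            apply le_of_eq
            congr 1
            ring
        _ = ENNReal.ofReal (∑ k ∈ Finset.range (M+1), 2 * dd k) := by
            rw [ENNReal.ofReal_sum_of_nonneg]
            intro k hk
            have := hδpos k (Nat.lt_succ_iff.mp (Finset.mem_range.mp hk))
            linarith
        _ = ENNReal.ofReal (q/2) := by
            congr 1
            have he : ∀ k ∈ Finset.range (M+1), 2 * dd k = q/2 * (w (k+1) - w k) := by
              intro k _; simp only [hdddef]; ring
            rw [Finset.sum_congr rfl he, ← Finset.mul_sum, hteles, mul_one]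
    have h1le : (1:ENNReal) ≤ volume Bs + ENNReal.ofReal (q/2) := by
      calc (1:ENNReal) = volume (Icc (0:ℝ) 1) := by simp
        _ ≤ volume (Bs ∪ bad) := measure_mono hcov
        _ ≤ volume Bs + volume bad := measure_union_le _ _
        _ ≤ volume Bs + ENNReal.ofReal (q/2) := add_le_add_right hbadvol _
    have hfin : volume Bs ≠ ⊤ := by
      refine ne_top_of_le_ne_top ?_ (measure_mono hBsub)
      simp
    have h2 : ENNReal.ofReal (1 - q/2) ≤ volume Bs := by
      rw [ENNReal.ofReal_sub _ (by positivity)]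
      refine tsub_le_iff_right.mpr ?_
      simpa using h1le
    have h3 : 1 - q/2 ≤ (volume Bs).toReal := by
      have := ENNReal.toReal_mono hfin h2
      rwa [ENNReal.toReal_ofReal (by linarith : (0:ℝ) ≤ 1 - q/2)] at this
    have hcq : q/2 < c*q := by nlinarith
    refine lt_of_lt_of_le ?_ h3
    linarith [hcq]
  -- Step 7: the conjugacy identity on B
  have hconj : ∀ x ∈ Bs, g x = 𝔏 (d x) := by
    intro x hxB
    simp only [hBdef, Set.mem_iUnion, exists_prop, Finset.mem_range] at hxB
    obtain ⟨k, hkr, hx1, hx2⟩ := hxB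
    have hk : k ≤ M := by omega
    have hδ := hδpos k hk
    have hab := (hh k hk).1
    have h2 := h2δ k hk
    have hxlo : w k < x := by linarith
    have hxhi : x < w (k+1) := by linarith
    have hIdxx : Idx x = k := hIdx_eq k hk x hxlo.le hxhi
    have hdx : d x = d0 (GG (Iz k)) (S k) (w k) x := by
      rw [hdk k x hIdxx]
      exact pc_mid hx1 hx2
    have hKθ' : K*θ ≤ 5/12 := by
      have hKθ0 : 0 ≤ K*θ := mul_nonneg hK0 hθ0.le
      linarith
    have hd0mono : StrictMonoOn (d0 (GG (Iz k)) (S k) (w k)) (Icc (w k) (w (k+1))) := by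
      refine strictMonoOn_of_deriv_pos (convex_Icc _ _) ?_ ?_
      · exact (continuous_const.add
          (((hGdiff (Iz k)).continuous.sub continuous_const).div_const (S k))).continuousOn
      · intro y hy
        rw [interior_Icc] at hy
        rw [(hasDerivAt_d0 (hGdiff (Iz k)) y).deriv]
        have habs := abs_le.mp (hd0Db k hk y (Ioo_subset_Icc_self hy))
        linarith [habs.1]
    have hd0a : d0 (GG (Iz k)) (S k) (w k) (w k) = w k := by rw [d0]; simp
    have hd0mem : d0 (GG (Iz k)) (S k) (w k) x ∈ Ico (w k) (w (k+1)) := by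
      constructor
      · have hlow := hd0mono ⟨le_rfl, by linarith⟩ ⟨hxlo.le, hxhi.le⟩ hxlo
        rw [hd0a] at hlow
        exact hlow.le
      · have hup := hd0mono ⟨hxlo.le, hxhi.le⟩ ⟨by linarith, le_rfl⟩ hxhi
        rw [hd0b k hk] at hup
        exact hup
    have hLval := h𝔏 k hk _ hd0mem
    have hrl : Function.rightLim g (w k) = GG (Iz k) (w k) :=
      rightLim_eqOn (by linarith) (hGsm (Iz k)).continuous (hgeq k hk)
    have hll : Function.leftLim g (w (k+1)) = GG (Iz k) (w (k+1)) :=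
      leftLim_eqOn (by linarith) (hGsm (Iz k)).continuous (hgeq k hk)
    have hgx : g x = GG (Iz k) x := hgeq k hk x ⟨hxlo, hxhi⟩
    rw [hdx, hLval, hrl, hll, hgx, d0]
    simp only [hSdef]
    have hne : w (k+1) - w k ≠ 0 := hab.ne'
    field_simp [hGne k hk]
    ring
  -- Step 8: assemble
  refine ⟨Bs, hBmeas, hBsub, hBvol, d, hCD, hmono, himg, hconj, ?_, ?_, ?_⟩
  · intro x hx; exact lt_of_le_of_lt (hdist x hx) hstrictineq.1
  · intro x hx; exact lt_of_le_of_lt (hinvb x hx) hstrictineq.2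
  · apply csInf_le
    · exact ⟨0, fun ε hε => hε.1.le⟩
    · refine ⟨by positivity, Bs, hBmeas, hBsub, hBvol, d, hCD, hmono, himg, hconj, ?_, ?_⟩
      · intro x hx; exact lt_of_le_of_lt (hdist x hx) hstrictineq.1
      · intro x hx; exact lt_of_le_of_lt (hinvb x hx) hstrictineq.2

end Stmt14
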